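/- For distinct nonnegative integers b_1 > b_2 > ... > b_n, the determinant of the n×n matrix whose (i,j) entry is the binomial coefficient C(b_{n+1-i}, j-1) equals (∏_{i<j}(b_i - b_j)) / (1! · 2! · ... · (n-1)!), and in particular it is a strictly positive integer. -/

import Mathlib

open Finset

theorem stmt0 (n : ℕ) (hn : 1 ≤ n) (b : Fin n → ℕ)
    (hb : ∀ i j : Fin n, i < j → b j < b i) :
    0 < (Matrix.of (fun i j : Fin n => ((b i.rev).choose j.val : ℤ))).det ∧
    ((Matrix.of (fun i j : Fin n => ((b i.rev).choose j.val : ℤ))).det : ℚ) =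
      (∏ i : Fin n, ∏ j ∈ Finset.Ioi i, ((b i : ℚ) - (b j : ℚ))) /
        (∏ i : Fin n, (Nat.factorial i.val : ℚ)) := by
  set v : Fin n → ℕ := fun i => b i.rev with hv
  set D : ℤ := (Matrix.of (fun i j : Fin n => ((b i.rev).choose j.val : ℤ))).det with hD
  -- vandermonde det = (∏ fact) * D
  have hpoch : (Matrix.of (fun (i j : Fin n) =>
      (Polynomial.eval ((v i : ℤ)) (descPochhammer ℤ (j : ℕ))))).det =
      (∏ i : Fin n, (Nat.factorial i.val : ℤ)) * D := by
    rw [hD]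
    have := Matrix.det_mul_row (fun (i : Fin n) => ((Nat.factorial (i : ℕ)) : ℤ))
      (Matrix.of (fun i j : Fin n => ((b i.rev).choose j.val : ℤ)))
    rw [← this]
    congr 1
    ext i j
    simp only [Matrix.of_apply, descPochhammer_eval_eq_descFactorial]
    rw [Nat.descFactorial_eq_factorial_mul_choose]
    push_cast
    ring
  have hvand : (Matrix.vandermonde (fun i => (v i : ℤ))).det =
      (∏ i : Fin n, (Nat.factorial i.val : ℤ)) * D := by
    rw [Matrix.det_eval_matrixOfPolynomials_eq_det_vandermonde
      (fun i => (v i : ℤ)) (fun i => descPochhammer ℤ i)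
      (fun i => descPochhammer_natDegree ℤ i) (fun i => monic_descPochhammer ℤ i)]
    exact hpoch
  have hvlt : ∀ i j : Fin n, i < j → v i < v j := fun i j hij =>
    hb j.rev i.rev (Fin.rev_lt_rev.mpr hij)
  have hvandpos : 0 < (Matrix.vandermonde (fun i => (v i : ℤ))).det := by
    rw [Matrix.det_vandermonde]
    apply Finset.prod_pos
    intro i _
    apply Finset.prod_pos
    intro j hj
    have := hvlt i j (Finset.mem_Ioi.mp hj)
    omega
  have hfactpos : 0 < (∏ i : Fin n, (Nat.factorial i.val : ℤ)) := by
    apply Finset.prod_pos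
    intro i _
    exact_mod_cast Nat.factorial_pos _
  have hDpos : 0 < D := by
    rw [hvand] at hvandpos
    nlinarith [hvandpos, hfactpos]
  refine ⟨hDpos, ?_⟩
  -- products reindexing
  have key : (∏ i : Fin n, ∏ j ∈ Finset.Ioi i, ((b i : ℚ) - (b j : ℚ))) =
      ∏ i : Fin n, ∏ j ∈ Finset.Ioi i, ((v j : ℚ) - (v i : ℚ)) := by
    rw [Finset.prod_sigma', Finset.prod_sigma']
    refine Finset.prod_nbij' (fun p => ⟨p.2.rev, p.1.rev⟩) (fun p => ⟨p.2.rev, p.1.rev⟩)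
      ?_ ?_ ?_ ?_ ?_
    · rintro ⟨i, j⟩ hp
      simp only [Finset.mem_sigma, Finset.mem_univ, Finset.mem_Ioi] at hp ⊢
      exact ⟨trivial, Fin.rev_lt_rev.mpr hp.2⟩
    · rintro ⟨i, j⟩ hp
      simp only [Finset.mem_sigma, Finset.mem_univ, Finset.mem_Ioi] at hp ⊢
      exact ⟨trivial, Fin.rev_lt_rev.mpr hp.2⟩
    · rintro ⟨i, j⟩ hp; simp [Fin.rev_rev]
    · rintro ⟨i, j⟩ hp; simp [Fin.rev_rev]
    · rintro ⟨i, j⟩ hp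
      simp [hv, Fin.rev_rev]
  rw [key]
  have hQ : ((Matrix.vandermonde (fun i => (v i : ℤ))).det : ℚ) =
      (∏ i : Fin n, (Nat.factorial i.val : ℚ)) * (D : ℚ) := by
    exact_mod_cast congrArg (fun z : ℤ => (z : ℚ)) hvand
  have hvandQ : ((Matrix.vandermonde (fun i => (v i : ℤ))).det : ℚ) =
      ∏ i : Fin n, ∏ j ∈ Finset.Ioi i, ((v j : ℚ) - (v i : ℚ)) := by
    rw [Matrix.det_vandermonde]
    push_cast
    ring
  rw [← hvandQ, hQ]
  have hf0 : (∏ i : Fin n, (Nat.factorial i.val : ℚ)) ≠ 0 := by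
    apply Finset.prod_ne_zero_iff.mpr
    intro i _
    exact_mod_cast (Nat.factorial_pos _).ne'
  field_simp
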